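/- Let Γ be a group and suppose there is a constant c such that for every finite-index normal subgroup N of Γ, Γ = ([Γ,Γ]-products of length ≤ c)·N, i.e., every coset of N contains a product of at most c commutators. Then for the ultrapower Γ* and every internal finite-index normal subgroup N* = [N_n]_n, one has Γ* = [Γ*,Γ*]^c · N*, and consequently Γ*/([Γ*,Γ*]∩N*-generated subgroup) splits as Γ*_ab × Γ*/N* when [Γ*,Γ*]^c · N* = Γ*. -/

import Mathlib

open Filter
open scoped commutatorElement

variable {Γ : Type*} [Group Γ]

/-- The internal subgroup `[N_n]_n` of the ultrapower `Γ* = ∏_U Γ` determined by a sequence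
of subgroups of `Γ`. -/
def germSubgroup (U : Ultrafilter ℕ) (N : ℕ → Subgroup Γ) :
    Subgroup (Filter.Germ (U : Filter ℕ) Γ) where
  carrier := {x | ∃ f : ℕ → Γ, x = (↑f : Filter.Germ (U : Filter ℕ) Γ) ∧
    ∀ᶠ n in (U : Filter ℕ), f n ∈ N n}
  one_mem' := ⟨1, rfl, Eventually.of_forall fun n => (N n).one_mem⟩
  mul_mem' := by
    rintro x y ⟨f, rfl, hf⟩ ⟨g, rfl, hg⟩
    exact ⟨f * g, rfl, (hf.and hg).mono fun n hn => (N n).mul_mem hn.1 hn.2⟩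
  inv_mem' := by
    rintro x ⟨f, rfl, hf⟩
    exact ⟨f⁻¹, rfl, hf.mono fun n hn => (N n).inv_mem hn⟩

/-- The internal subgroup determined by a sequence of normal subgroups is normal. -/
lemma germSubgroup_normal (U : Ultrafilter ℕ) (N : ℕ → Subgroup Γ)
    (hN : ∀ n, (N n).Normal) : (germSubgroup U N).Normal := by
  constructor
  rintro x ⟨f, rfl, hf⟩ g
  refine Filter.Germ.inductionOn g fun h => ?_
  exact ⟨h * f * h⁻¹, rfl, hf.mono fun n hn => (hN n).conj_mem _ hn (h n)⟩


lemma germ_coe_commutator (U : Ultrafilter ℕ) (a b : ℕ → Γ) :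
    ((fun n => ⁅a n, b n⁆ : ℕ → Γ) : Filter.Germ (U : Filter ℕ) Γ) =
      ⁅(↑a : Filter.Germ (U : Filter ℕ) Γ), ↑b⁆ := by
  rfl

lemma exists_germ_list (U : Ultrafilter ℕ) (c : ℕ) (L : ℕ → List Γ)
    (hlen : ∀ n, (L n).length = c)
    (hcomm : ∀ n, ∀ x ∈ L n, ∃ a b : Γ, x = ⁅a, b⁆) :
    ∃ lg : List (Filter.Germ (U : Filter ℕ) Γ), lg.length = c ∧
      (∀ x ∈ lg, ∃ a b : Filter.Germ (U : Filter ℕ) Γ, x = ⁅a, b⁆) ∧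
      lg.prod = ((fun n => (L n).prod : ℕ → Γ) : Filter.Germ (U : Filter ℕ) Γ) := by
  induction c generalizing L with
  | zero =>
      refine ⟨[], rfl, by simp, ?_⟩
      have : ∀ n, (L n).prod = 1 := fun n => by
        rw [List.length_eq_zero_iff.mp (hlen n)]; rfl
      rw [funext this]
      rfl
  | succ c ih =>
      have hne : ∀ n, L n ≠ [] := fun n => List.ne_nil_of_length_pos (by rw [hlen]; omega)
      set H : ℕ → Γ := fun n => (L n).head (hne n) with hH
      set T : ℕ → List Γ := fun n => (L n).tail with hT
      have hcons : ∀ n, L n = H n :: T n := fun n => (List.cons_head_tail (hne n)).symm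
      obtain ⟨lg, hlg1, hlg2, hlg3⟩ := ih T
        (fun n => by have := hlen n; rw [hcons n] at this; simpa using this)
        (fun n x hx => hcomm n x (by rw [hcons n]; exact List.mem_cons_of_mem _ hx))
      have hHc : ∀ n, ∃ a b : Γ, H n = ⁅a, b⁆ := fun n =>
        hcomm n (H n) (by rw [hcons n]; exact List.mem_cons_self)
      choose a b hab using hHc
      refine ⟨(↑H : Filter.Germ (U : Filter ℕ) Γ) :: lg, by simp [hlg1], ?_, ?_⟩
      · intro x hx
        rcases List.mem_cons.mp hx with rfl | hx
        · exact ⟨↑a, ↑b, by rw [show H = fun n => ⁅a n, b n⁆ from funext hab]; rfl⟩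
        · exact hlg2 x hx
      · rw [List.prod_cons, hlg3]
        have : ∀ n, (L n).prod = H n * (T n).prod := fun n => by
          conv_lhs => rw [hcons n]
          simp
        rw [funext this]
        rfl

lemma ker_abelianization_of (G : Type*) [Group G] :
    (Abelianization.of : G →* Abelianization G).ker = commutator G := by
  ext x
  show (QuotientGroup.mk x : G ⧸ commutator G) = 1 ↔ _
  exact QuotientGroup.eq_one_iff x

/-- suppose there is `c` such that for every finite-index normal subgroup
`N ◁ Γ` every coset of `N` contains a product of at most `c` commutators.  Then, in the
ultrapower `Γ*` over a non-principal ultrafilter, for every internal finite-index normal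
subgroup `N* = [N_n]_n` one has `Γ* = [Γ*,Γ*]^c · N*`; consequently the natural map
`Γ* → Γ*_ab × Γ*/N*` is surjective with kernel `[Γ*,Γ*] ⊓ N*`, exhibiting the splitting
`Γ*/([Γ*,Γ*] ⊓ N*) ≅ Γ*_ab × Γ*/N*`. -/
theorem ultrapower_commutator_coset_splitting
    (c : ℕ)
    (h : ∀ N : Subgroup Γ, N.Normal → N.FiniteIndex → ∀ g : Γ,
      ∃ l : List Γ, l.length ≤ c ∧ (∀ x ∈ l, ∃ a b : Γ, x = ⁅a, b⁆) ∧
        ∃ m ∈ N, g = l.prod * m)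
    (U : Ultrafilter ℕ) (hU : ∀ a : ℕ, (U : Filter ℕ) ≠ pure a)
    (N : ℕ → Subgroup Γ) (hNnormal : ∀ n, (N n).Normal) (hNfi : ∀ n, (N n).FiniteIndex) :
    (∀ g : Filter.Germ (U : Filter ℕ) Γ,
      ∃ l : List (Filter.Germ (U : Filter ℕ) Γ), l.length ≤ c ∧
        (∀ x ∈ l, ∃ a b : Filter.Germ (U : Filter ℕ) Γ, x = ⁅a, b⁆) ∧
        ∃ m ∈ germSubgroup U N, g = l.prod * m) ∧
    (letI := germSubgroup_normal U N hNnormal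
     let φ := (Abelianization.of : Filter.Germ (U : Filter ℕ) Γ →*
        Abelianization (Filter.Germ (U : Filter ℕ) Γ)).prod
        (QuotientGroup.mk' (germSubgroup U N))
     Function.Surjective φ ∧
       φ.ker = commutator (Filter.Germ (U : Filter ℕ) Γ) ⊓ germSubgroup U N) := by
  have part1 : ∀ g : Filter.Germ (U : Filter ℕ) Γ,
      ∃ l : List (Filter.Germ (U : Filter ℕ) Γ), l.length ≤ c ∧
        (∀ x ∈ l, ∃ a b : Filter.Germ (U : Filter ℕ) Γ, x = ⁅a, b⁆) ∧
        ∃ m ∈ germSubgroup U N, g = l.prod * m := by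
    intro g
    refine Filter.Germ.inductionOn g fun f => ?_
    choose l hlen hcomm m hm hprod using fun n => h (N n) (hNnormal n) (hNfi n) (f n)
    set L : ℕ → List Γ := fun n => l n ++ List.replicate (c - (l n).length) 1 with hL
    have hLlen : ∀ n, (L n).length = c := fun n => by
      have := hlen n; simp only [hL, List.length_append, List.length_replicate]; omega
    have hLcomm : ∀ n, ∀ x ∈ L n, ∃ a b : Γ, x = ⁅a, b⁆ := by
      intro n x hx
      rcases List.mem_append.mp hx with hx | hx
      · exact hcomm n x hx
      · exact ⟨1, 1, by rw [List.eq_of_mem_replicate hx]; simp⟩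
    obtain ⟨lg, h1, h2, h3⟩ := exists_germ_list U c L hLlen hLcomm
    refine ⟨lg, h1.le, h2, ↑m, ⟨m, rfl, Eventually.of_forall hm⟩, ?_⟩
    rw [h3]
    have hfe : ∀ n, f n = (L n).prod * m n := fun n => by
      simp only [hL, List.prod_append, List.prod_replicate, one_pow, mul_one]
      exact hprod n
    calc (↑f : Filter.Germ (U : Filter ℕ) Γ)
        = ↑(fun n => (L n).prod * m n) := by rw [funext hfe]
      _ = ↑(fun n => (L n).prod) * ↑m := rfl
  refine ⟨part1, ?_⟩
  letI := germSubgroup_normal U N hNnormal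
  constructor
  · rintro ⟨x, y⟩
    obtain ⟨k, rfl⟩ : ∃ k, Abelianization.of k = x := Quotient.inductionOn' x fun a => ⟨a, rfl⟩
    obtain ⟨g, rfl⟩ : ∃ g, QuotientGroup.mk' (germSubgroup U N) g = y :=
      Quotient.inductionOn' y fun a => ⟨a, rfl⟩
    obtain ⟨lg, _, hlc, m, hmN, hgm⟩ := part1 (k⁻¹ * g)
    refine ⟨k * lg.prod, ?_⟩
    have h1 : Abelianization.of lg.prod = 1 := by
      rw [map_list_prod]
      apply List.prod_eq_one
      intro x hx
      obtain ⟨y, hy, rfl⟩ := List.mem_map.mp hx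
      obtain ⟨a, b, rfl⟩ := hlc y hy
      rw [map_commutatorElement]
      exact commutatorElement_eq_one_iff_commute.mpr (mul_comm _ _)
    have h2 : k * lg.prod = g * m⁻¹ := by
      have : lg.prod = k⁻¹ * g * m⁻¹ := by rw [hgm]; group
      rw [this]; group
    refine Prod.ext ?_ ?_
    · show Abelianization.of (k * lg.prod) = Abelianization.of k
      rw [map_mul, h1, mul_one]
    · show QuotientGroup.mk' (germSubgroup U N) (k * lg.prod) = QuotientGroup.mk' _ g
      rw [h2, map_mul, map_inv]
      have : QuotientGroup.mk' (germSubgroup U N) m = 1 :=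
        (QuotientGroup.eq_one_iff m).mpr hmN
      rw [this]; simp
  · rw [MonoidHom.ker_prod, ker_abelianization_of, QuotientGroup.ker_mk']
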